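/- Fix integers N ≥ 2 and 0 ≤ m < n ≤ N-1. Define R̂_{n,m}(-1) as the limit as A → -1 of the expression (-1)^{n-m}·({m}!·{2N-2m-2}!!·{2N-m-1}^+!)/({n}!·{2N-2n-2}!!·{2N-n-1}^+!), where {k} = (-A)^k - (-A)^{-k}, {k}^+ = (-A)^k + (-A)^{-k}, {k}! = {1}{2}⋯{k}, and {k}!! = {k}{k-2}⋯. Then this limit equals ((-4)^{n-m}·m!·(N-1-m)!)/(n!·(N-1-n)!). -/

import Mathlib

open Filter Finset

/-- `{k} = (-A)^k - (-A)^{-k}` -/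
noncomputable def qbr (A : ℂ) (k : ℕ) : ℂ := (-A) ^ (k : ℤ) - (-A) ^ (-(k : ℤ))

/-- `{k}^+ = (-A)^k + (-A)^{-k}` -/
noncomputable def qbrP (A : ℂ) (k : ℕ) : ℂ := (-A) ^ (k : ℤ) + (-A) ^ (-(k : ℤ))

/-- `{k}! = {1}{2}⋯{k}` -/
noncomputable def qfact (A : ℂ) (k : ℕ) : ℂ := ∏ j ∈ Finset.range k, qbr A (j + 1)

/-- `{k}^+! = {1}^+{2}^+⋯{k}^+` -/
noncomputable def qfactP (A : ℂ) (k : ℕ) : ℂ := ∏ j ∈ Finset.range k, qbrP A (j + 1)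

/-- `{k}!! = {k}{k-2}{k-4}⋯` (down to `1` or `2`) -/
noncomputable def qdfact (A : ℂ) (k : ℕ) : ℂ :=
  ∏ i ∈ Finset.range ((k + 1) / 2), qbr A (k - 2 * i)

noncomputable def gs (A : ℂ) (k : ℕ) : ℂ := ∑ i ∈ Finset.range k, (A ^ 2) ^ i

lemma qbr_eq (A : ℂ) (hA : A ≠ 0) (k : ℕ) :
    qbr A k = (-A) ^ (-(k : ℤ)) * ((A ^ 2 - 1) * gs A k) := by
  have hx : (-A) ≠ 0 := neg_ne_zero.mpr hA
  have h2k : (-A) ^ ((2 * k : ℕ) : ℤ) = (A ^ 2) ^ k := by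
    rw [zpow_natCast, pow_mul, neg_sq]
  have hk : (-A) ^ (k : ℤ) = (-A) ^ (-(k : ℤ)) * (A ^ 2) ^ k := by
    rw [← h2k, ← zpow_add₀ hx]
    congr 1
    push_cast
    ring
  have hgeo : (A ^ 2) ^ k - 1 = (A ^ 2 - 1) * gs A k := by
    rw [mul_comm, gs, geom_sum_mul]
  rw [qbr, hk, ← hgeo]
  ring

lemma gs_cont (k : ℕ) : Continuous (fun A : ℂ => gs A k) := by
  unfold gs
  exact continuous_finset_sum _ fun i _ => (continuous_pow 2).pow i

lemma gs_neg_one (k : ℕ) : gs (-1) k = (k : ℂ) := by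
  simp [gs]

lemma contAt_negzpow (z : ℤ) : ContinuousAt (fun A : ℂ => (-A) ^ z) (-1 : ℂ) := by
  have h1 : ContinuousAt (fun x : ℂ => x ^ z) (-(-1 : ℂ)) :=
    continuousAt_zpow₀ _ _ (Or.inl (by norm_num))
  exact h1.comp continuous_neg.continuousAt

lemma contAt_prod {s : Finset ℕ} {F : ℕ → ℂ → ℂ} {x : ℂ}
    (h : ∀ j ∈ s, ContinuousAt (F j) x) :
    ContinuousAt (fun A => ∏ j ∈ s, F j A) x :=
  tendsto_finset_prod s fun j hj => h j hj

lemma qbrP_contAt (k : ℕ) : ContinuousAt (fun A => qbrP A k) (-1 : ℂ) := by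
  unfold qbrP
  exact (contAt_negzpow _).add (contAt_negzpow _)

lemma qbrP_neg_one (k : ℕ) : qbrP (-1) k = 2 := by
  simp [qbrP]
  norm_num

lemma qfactP_contAt (k : ℕ) : ContinuousAt (fun A => qfactP A k) (-1 : ℂ) := by
  unfold qfactP
  exact contAt_prod fun j _ => qbrP_contAt (j + 1)

lemma qfactP_neg_one (k : ℕ) : qfactP (-1) k = 2 ^ k := by
  simp [qfactP, qbrP_neg_one]

lemma qdfact_even (A : ℂ) (K : ℕ) :
    qdfact A (2 * K) = ∏ j ∈ Finset.range K, qbr A (2 * (j + 1)) := by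
  unfold qdfact
  have h : (2 * K + 1) / 2 = K := by omega
  rw [h, ← Finset.prod_range_reflect (fun j => qbr A (2 * (j + 1))) K]
  refine Finset.prod_congr rfl fun i hi => ?_
  simp only [Finset.mem_range] at hi
  congr 1
  omega

lemma prod_Ico_fact (a b : ℕ) (h : a ≤ b) :
    (∏ j ∈ Finset.Ico a b, (j + 1)) * a.factorial = b.factorial := by
  induction b, h using Nat.le_induction with
  | base => simp
  | succ b hab ih =>
    rw [Finset.prod_Ico_succ_top hab, mul_assoc, mul_comm (b+1), ← mul_assoc, ih,
      Nat.factorial_succ, mul_comm]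


set_option maxHeartbeats 1000000 in
/-- for `N ≥ 2` and `0 ≤ m < n ≤ N-1`, the expression
`(-1)^{n-m}·({m}!·{2N-2m-2}!!·{2N-m-1}^+!)/({n}!·{2N-2n-2}!!·{2N-n-1}^+!)`
tends, as `A → -1` along values where the denominator is nonzero, to
`((-4)^{n-m}·m!·(N-1-m)!)/(n!·(N-1-n)!)`. -/
theorem stmt5 (N m n : ℕ) (hN : 2 ≤ N) (hmn : m < n) (hn : n ≤ N - 1) :
    Tendsto
      (fun A : ℂ =>
        (-1 : ℂ) ^ (n - m) *
            (qfact A m * qdfact A (2 * N - 2 * m - 2) * qfactP A (2 * N - m - 1)) /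
          (qfact A n * qdfact A (2 * N - 2 * n - 2) * qfactP A (2 * N - n - 1)))
      (nhdsWithin (-1 : ℂ)
        {A : ℂ | A ≠ 0 ∧
          qfact A n * qdfact A (2 * N - 2 * n - 2) * qfactP A (2 * N - n - 1) ≠ 0})
      (nhds ((-4 : ℂ) ^ (n - m) * (m.factorial : ℂ) * ((N - 1 - m).factorial : ℂ) /
        ((n.factorial : ℂ) * ((N - 1 - n).factorial : ℂ)))) := by
  set K1 := N - 1 - m with hK1def
  set K2 := N - 1 - n with hK2def
  set p := n - m with hpdef
  have hK : K2 ≤ K1 := by omega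
  set g : ℂ → ℂ := fun A =>
      (-1 : ℂ) ^ p *
        ((∏ j ∈ Finset.Ico K2 K1, (-A) ^ (-((2 * (j + 1) : ℕ) : ℤ)) * gs A (2 * (j + 1))) *
          qfactP A (2 * N - m - 1)) /
        ((∏ j ∈ Finset.Ico m n, (-A) ^ (-(((j + 1) : ℕ) : ℤ)) * gs A (j + 1)) *
          qfactP A (2 * N - n - 1)) with hgdef
  have hden1 : ((∏ j ∈ Finset.Ico m n, (((j:ℕ) + 1 : ℕ) : ℂ)) * 2 ^ (2 * N - n - 1)) ≠ 0 := by
    refine mul_ne_zero (Finset.prod_ne_zero_iff.mpr fun j _ => ?_) (pow_ne_zero _ two_ne_zero)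
    exact_mod_cast Nat.succ_ne_zero j
  have hcont : ContinuousAt g (-1) := by
    rw [hgdef]
    apply ContinuousAt.div
    · exact continuousAt_const.mul
        ((contAt_prod fun j _ => (contAt_negzpow _).mul (gs_cont _).continuousAt).mul
          (qfactP_contAt _))
    · exact (contAt_prod fun j _ => (contAt_negzpow _).mul (gs_cont _).continuousAt).mul
        (qfactP_contAt _)
    · simp only [neg_neg, one_zpow, one_mul, gs_neg_one, qfactP_neg_one]
      exact_mod_cast hden1
  have hcard1 : K1 - K2 = p := by omega
  have hK2fac : ((K2.factorial : ℂ)) ≠ 0 := Nat.cast_ne_zero.mpr K2.factorial_ne_zero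
  have hmfac : ((m.factorial : ℂ)) ≠ 0 := Nat.cast_ne_zero.mpr m.factorial_ne_zero
  have c1 : (∏ j ∈ Finset.Ico K2 K1, ((j : ℂ) + 1)) * (K2.factorial : ℂ) = K1.factorial := by
    exact_mod_cast congrArg (fun t : ℕ => (t : ℂ)) (prod_Ico_fact K2 K1 hK)
  have c2 : (∏ j ∈ Finset.Ico m n, ((j : ℂ) + 1)) * (m.factorial : ℂ) = n.factorial := by
    exact_mod_cast congrArg (fun t : ℕ => (t : ℂ)) (prod_Ico_fact m n hmn.le)
  have hval : g (-1) = (-4 : ℂ) ^ p * (m.factorial : ℂ) * (K1.factorial : ℂ) /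
      ((n.factorial : ℂ) * (K2.factorial : ℂ)) := by
    rw [hgdef]
    simp only [neg_neg, one_zpow, one_mul, gs_neg_one, qfactP_neg_one]
    push_cast
    have e1 : (∏ j ∈ Finset.Ico K2 K1, (2 * ((j : ℂ) + 1))) =
        2 ^ p * ∏ j ∈ Finset.Ico K2 K1, ((j : ℂ) + 1) := by
      rw [Finset.prod_mul_distrib, Finset.prod_const, Nat.card_Ico, hcard1]
    have h2 : (2 : ℂ) ^ (2 * N - m - 1) = 2 ^ (2 * N - n - 1) * 2 ^ p := by
      rw [← pow_add]; congr 1; omega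
    have h4 : (-4 : ℂ) ^ p = (-1) ^ p * (2 ^ p * 2 ^ p) := by
      rw [show (-4 : ℂ) = (-1) * (2 * 2) by norm_num, mul_pow, mul_pow]
    have e2 : (∏ j ∈ Finset.Ico K2 K1, ((j : ℂ) + 1)) =
        (K1.factorial : ℂ) / (K2.factorial : ℂ) := by
      rw [eq_div_iff hK2fac]; exact c1
    have e3 : (∏ j ∈ Finset.Ico m n, ((j : ℂ) + 1)) =
        (n.factorial : ℂ) / (m.factorial : ℂ) := by
      rw [eq_div_iff hmfac]; exact c2
    rw [e1, e2, e3, h2, h4]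
    have hnfac : ((n.factorial : ℂ)) ≠ 0 := Nat.cast_ne_zero.mpr n.factorial_ne_zero
    field_simp
  have htg : Tendsto g
      (nhdsWithin (-1 : ℂ)
        {A : ℂ | A ≠ 0 ∧
          qfact A n * qdfact A (2 * N - 2 * n - 2) * qfactP A (2 * N - n - 1) ≠ 0})
      (nhds ((-4 : ℂ) ^ p * (m.factorial : ℂ) * (K1.factorial : ℂ) /
        ((n.factorial : ℂ) * (K2.factorial : ℂ)))) := by
    rw [← hval]
    exact hcont.tendsto.mono_left nhdsWithin_le_nhds
  refine Tendsto.congr' ?_ htg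
  filter_upwards [self_mem_nhdsWithin] with A hA
  obtain ⟨hA0, hden⟩ := hA
  have hx : (-A) ≠ 0 := neg_ne_zero.mpr hA0
  have h1 := mul_ne_zero_iff.mp hden
  have hPp2 := h1.2
  have h2 := mul_ne_zero_iff.mp h1.1
  have hFn : (∏ j ∈ Finset.range n, qbr A (j + 1)) ≠ 0 := h2.1
  have hD2 := h2.2
  have hqbr : ∀ j, j < n → qbr A (j + 1) ≠ 0 := fun j hj =>
    Finset.prod_ne_zero_iff.mp hFn j (Finset.mem_range.mpr hj)
  have hqn : qbr A n ≠ 0 := by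
    have h := hqbr (n - 1) (by omega)
    rwa [show n - 1 + 1 = n from by omega] at h
  have hu : A ^ 2 - 1 ≠ 0 := by
    rw [qbr_eq A hA0 n] at hqn
    exact (mul_ne_zero_iff.mp (mul_ne_zero_iff.mp hqn).2).1
  have hgs : ∀ j ∈ Finset.Ico m n, gs A (j + 1) ≠ 0 := by
    intro j hj
    have h := hqbr j (Finset.mem_Ico.mp hj).2
    rw [qbr_eq A hA0] at h
    exact (mul_ne_zero_iff.mp (mul_ne_zero_iff.mp h).2).2
  have hFm : qfact A m ≠ 0 :=
    Finset.prod_ne_zero_iff.mpr fun j hj => hqbr j ((Finset.mem_range.mp hj).trans hmn)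
  have hI1 : qfact A n = qfact A m * ∏ j ∈ Finset.Ico m n, qbr A (j + 1) :=
    (Finset.prod_range_mul_prod_Ico _ hmn.le).symm
  have hI2 : qdfact A (2 * N - 2 * m - 2) =
      qdfact A (2 * N - 2 * n - 2) * ∏ j ∈ Finset.Ico K2 K1, qbr A (2 * (j + 1)) := by
    rw [show 2 * N - 2 * m - 2 = 2 * K1 by omega, show 2 * N - 2 * n - 2 = 2 * K2 by omega,
      qdfact_even, qdfact_even]
    exact (Finset.prod_range_mul_prod_Ico _ hK).symm
  have hP2 : (∏ j ∈ Finset.Ico K2 K1, qbr A (2 * (j + 1))) =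
      (A ^ 2 - 1) ^ p *
        ∏ j ∈ Finset.Ico K2 K1, (-A) ^ (-((2 * (j + 1) : ℕ) : ℤ)) * gs A (2 * (j + 1)) := by
    rw [← hcard1, ← Nat.card_Ico K2 K1, ← Finset.prod_const, ← Finset.prod_mul_distrib]
    refine Finset.prod_congr rfl fun j _ => ?_
    rw [qbr_eq A hA0]
    ring
  have hP1 : (∏ j ∈ Finset.Ico m n, qbr A (j + 1)) =
      (A ^ 2 - 1) ^ p *
        ∏ j ∈ Finset.Ico m n, (-A) ^ (-(((j + 1) : ℕ) : ℤ)) * gs A (j + 1) := by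
    rw [hpdef, ← Nat.card_Ico m n, ← Finset.prod_const, ← Finset.prod_mul_distrib]
    refine Finset.prod_congr rfl fun j _ => ?_
    rw [qbr_eq A hA0]
    ring
  have hB2 : (∏ j ∈ Finset.Ico m n, (-A) ^ (-(((j + 1) : ℕ) : ℤ)) * gs A (j + 1)) ≠ 0 :=
    Finset.prod_ne_zero_iff.mpr fun j hj => mul_ne_zero (zpow_ne_zero _ hx) (hgs j hj)
  show g A = _
  rw [hgdef]
  simp only
  rw [show qfact A n = _ from hI1, hI2, hP2, hP1]
  have hup : ((A ^ 2 - 1) ^ p) ≠ 0 := pow_ne_zero _ hu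
  rw [div_eq_div_iff (mul_ne_zero hB2 hPp2)
    (mul_ne_zero (mul_ne_zero (mul_ne_zero hFm (mul_ne_zero hup hB2)) hD2) hPp2)]
  ring
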